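/- In any model category with binary coproducts, the class of h-cofibrations is closed under retracts in the arrow category, and under finite coproducts: if f : X → Y is an h-cofibration and Z is any object then f ⊔ 1_Z : X ⊔ Z → Y ⊔ Z is an h-cofibration; consequently the coproduct f ⊔ g of two h-cofibrations f and g is an h-cofibration. -/

import Mathlib

open CategoryTheory CategoryTheory.Limits

universe v u

/-- A model structure on a category: classes of weak equivalences, cofibrations and
fibrations, satisfying the model category axioms (two-out-of-three, closure of the
three classes under retracts, lifting, and factorization). -/
structure ModelStruct (C : Type u) [Category.{v} C] : Type (max u v) where
  /-- weak equivalences -/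
  W : MorphismProperty C
  /-- cofibrations -/
  Cof : MorphismProperty C
  /-- fibrations -/
  Fib : MorphismProperty C
  W_of_isIso : ∀ {X Y : C} (f : X ⟶ Y), IsIso f → W f
  W_comp : ∀ {X Y Z : C} (f : X ⟶ Y) (g : Y ⟶ Z), W f → W g → W (f ≫ g)
  W_of_comp_left : ∀ {X Y Z : C} (f : X ⟶ Y) (g : Y ⟶ Z), W f → W (f ≫ g) → W g
  W_of_comp_right : ∀ {X Y Z : C} (f : X ⟶ Y) (g : Y ⟶ Z), W g → W (f ≫ g) → W f
  W_retract : ∀ {X Y X' Y' : C} (f : X ⟶ Y) (f' : X' ⟶ Y') (i : X ⟶ X') (r : X' ⟶ X)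
      (j : Y ⟶ Y') (s : Y' ⟶ Y), i ≫ r = 𝟙 X → j ≫ s = 𝟙 Y →
      i ≫ f' = f ≫ j → r ≫ f = f' ≫ s → W f' → W f
  Cof_retract : ∀ {X Y X' Y' : C} (f : X ⟶ Y) (f' : X' ⟶ Y') (i : X ⟶ X') (r : X' ⟶ X)
      (j : Y ⟶ Y') (s : Y' ⟶ Y), i ≫ r = 𝟙 X → j ≫ s = 𝟙 Y →
      i ≫ f' = f ≫ j → r ≫ f = f' ≫ s → Cof f' → Cof f
  Fib_retract : ∀ {X Y X' Y' : C} (f : X ⟶ Y) (f' : X' ⟶ Y') (i : X ⟶ X') (r : X' ⟶ X)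
      (j : Y ⟶ Y') (s : Y' ⟶ Y), i ≫ r = 𝟙 X → j ≫ s = 𝟙 Y →
      i ≫ f' = f ≫ j → r ≫ f = f' ≫ s → Fib f' → Fib f
  lift : ∀ {A B X Y : C} (i : A ⟶ B) (p : X ⟶ Y), Cof i → Fib p → (W i ∨ W p) →
      ∀ (u : A ⟶ X) (v : B ⟶ Y), u ≫ p = i ≫ v → ∃ l : B ⟶ X, i ≫ l = u ∧ l ≫ p = v
  factorization_cof_trivFib : ∀ {X Y : C} (f : X ⟶ Y), ∃ (Z : C) (i : X ⟶ Z) (p : Z ⟶ Y),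
      Cof i ∧ Fib p ∧ W p ∧ i ≫ p = f
  factorization_trivCof_fib : ∀ {X Y : C} (f : X ⟶ Y), ∃ (Z : C) (i : X ⟶ Z) (p : Z ⟶ Y),
      Cof i ∧ W i ∧ Fib p ∧ i ≫ p = f

variable {C : Type u} [Category.{v} C]

/-- A morphism `f : X ⟶ Y` is an h-cofibration if cobase change along `f` preserves
weak equivalences: for every `g : X ⟶ A`, every weak equivalence `w : A ⟶ B`, and
pushouts `P = Y ⊔_X A` (of `g` along `f`) and `Q = Y ⊔_X B` (of `g ≫ w` along `f`),
the induced map `w' : P ⟶ Q` is a weak equivalence. -/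
def HCof (M : ModelStruct C) {X Y : C} (f : X ⟶ Y) : Prop :=
  ∀ ⦃A B P Q : C⦄ (g : X ⟶ A) (w : A ⟶ B)
    (a : A ⟶ P) (y : Y ⟶ P) (b : B ⟶ Q) (y' : Y ⟶ Q) (w' : P ⟶ Q),
    M.W w → IsPushout g f a y → IsPushout (g ≫ w) f b y' →
    a ≫ w' = w ≫ b → y ≫ w' = y' → M.W w'

/-- A model category is left proper if the pushout of a weak equivalence along a
cofibration is again a weak equivalence. -/
def LeftProper (M : ModelStruct C) : Prop :=
  ∀ ⦃X Y Z P : C⦄ (i : X ⟶ Y) (w : X ⟶ Z) (h : Z ⟶ P) (k : Y ⟶ P),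
    M.Cof i → M.W w → IsPushout w i h k → M.W k

section Aux

variable {C : Type u} [Category.{v} C]

/-- Retract closure of h-cofibrations. -/
lemma hcof_retract [HasPushouts C] (M : ModelStruct C)
    {X Y X' Y' : C} (f : X ⟶ Y) (f' : X' ⟶ Y') (i : X ⟶ X') (r : X' ⟶ X)
    (j : Y ⟶ Y') (s : Y' ⟶ Y) (hir : i ≫ r = 𝟙 X) (hjs : j ≫ s = 𝟙 Y)
    (hsq1 : i ≫ f' = f ≫ j) (hsq2 : r ≫ f = f' ≫ s) (hf' : HCof M f') : HCof M f := by
  intro A B P Q g w a y b y' w' hw hP hQ hc hy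
  have hP' : IsPushout (r ≫ g) f' (pushout.inl (r ≫ g) f') (pushout.inr (r ≫ g) f') :=
    IsPushout.of_hasPushout _ _
  have hQ' : IsPushout ((r ≫ g) ≫ w) f' (pushout.inl ((r ≫ g) ≫ w) f')
      (pushout.inr ((r ≫ g) ≫ w) f') := IsPushout.of_hasPushout _ _
  set a₁ := pushout.inl (r ≫ g) f' with ha₁
  set y₁ := pushout.inr (r ≫ g) f' with hy₁
  set b₁ := pushout.inl ((r ≫ g) ≫ w) f' with hb₁
  set y'₁ := pushout.inr ((r ≫ g) ≫ w) f' with hy'₁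
  have hcomm : (r ≫ g) ≫ w ≫ b₁ = f' ≫ y'₁ := by
    rw [← Category.assoc, hQ'.w]
  let w'' : pushout (r ≫ g) f' ⟶ pushout ((r ≫ g) ≫ w) f' := hP'.desc (w ≫ b₁) y'₁ hcomm
  have hw'' : M.W w'' :=
    hf' (r ≫ g) w a₁ y₁ b₁ y'₁ w'' hw hP' hQ' (hP'.inl_desc _ _ _) (hP'.inr_desc _ _ _)
  -- inclusion P → P'
  have hPcomm : g ≫ a₁ = f ≫ j ≫ y₁ := by
    calc g ≫ a₁ = (i ≫ r) ≫ g ≫ a₁ := by rw [hir, Category.id_comp]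
    _ = i ≫ (r ≫ g) ≫ a₁ := by simp only [Category.assoc]
    _ = i ≫ f' ≫ y₁ := by rw [hP'.w]
    _ = (i ≫ f') ≫ y₁ := by simp only [Category.assoc]
    _ = (f ≫ j) ≫ y₁ := by rw [hsq1]
    _ = f ≫ j ≫ y₁ := by simp only [Category.assoc]
  let ιP : P ⟶ pushout (r ≫ g) f' := hP.desc a₁ (j ≫ y₁) hPcomm
  have hPcomm' : (r ≫ g) ≫ a = f' ≫ s ≫ y := by
    calc (r ≫ g) ≫ a = r ≫ g ≫ a := by simp only [Category.assoc]
    _ = r ≫ f ≫ y := by rw [hP.w]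
    _ = (r ≫ f) ≫ y := by simp only [Category.assoc]
    _ = (f' ≫ s) ≫ y := by rw [hsq2]
    _ = f' ≫ s ≫ y := by simp only [Category.assoc]
  let ρP : pushout (r ≫ g) f' ⟶ P := hP'.desc a (s ≫ y) hPcomm'
  have hPret : ιP ≫ ρP = 𝟙 P := by
    apply hP.hom_ext
    · rw [← Category.assoc, hP.inl_desc, hP'.inl_desc, Category.comp_id]
    · rw [← Category.assoc, hP.inr_desc, Category.assoc, hP'.inr_desc, ← Category.assoc,
        hjs, Category.id_comp, Category.comp_id]
  have hQcomm : (g ≫ w) ≫ b₁ = f ≫ j ≫ y'₁ := by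
    calc (g ≫ w) ≫ b₁ = (i ≫ r) ≫ (g ≫ w) ≫ b₁ := by rw [hir, Category.id_comp]
    _ = i ≫ ((r ≫ g) ≫ w) ≫ b₁ := by simp only [Category.assoc]
    _ = i ≫ f' ≫ y'₁ := by rw [hQ'.w]
    _ = (i ≫ f') ≫ y'₁ := by simp only [Category.assoc]
    _ = (f ≫ j) ≫ y'₁ := by rw [hsq1]
    _ = f ≫ j ≫ y'₁ := by simp only [Category.assoc]
  let ιQ : Q ⟶ pushout ((r ≫ g) ≫ w) f' := hQ.desc b₁ (j ≫ y'₁) hQcomm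
  have hQcomm' : ((r ≫ g) ≫ w) ≫ b = f' ≫ s ≫ y' := by
    calc ((r ≫ g) ≫ w) ≫ b = r ≫ (g ≫ w) ≫ b := by simp only [Category.assoc]
    _ = r ≫ f ≫ y' := by rw [hQ.w]
    _ = (r ≫ f) ≫ y' := by simp only [Category.assoc]
    _ = (f' ≫ s) ≫ y' := by rw [hsq2]
    _ = f' ≫ s ≫ y' := by simp only [Category.assoc]
  let ρQ : pushout ((r ≫ g) ≫ w) f' ⟶ Q := hQ'.desc b (s ≫ y') hQcomm'
  have hQret : ιQ ≫ ρQ = 𝟙 Q := by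
    apply hQ.hom_ext
    · rw [← Category.assoc, hQ.inl_desc, hQ'.inl_desc, Category.comp_id]
    · rw [← Category.assoc, hQ.inr_desc, Category.assoc, hQ'.inr_desc, ← Category.assoc,
        hjs, Category.id_comp, Category.comp_id]
  have hsqA : ιP ≫ w'' = w' ≫ ιQ := by
    apply hP.hom_ext
    · rw [← Category.assoc, hP.inl_desc, ← Category.assoc, hc]
      simp only [Category.assoc]
      show a₁ ≫ w'' = w ≫ b ≫ ιQ
      rw [hP'.inl_desc]
      congr 1
      rw [hQ.inl_desc]
    · rw [← Category.assoc, hP.inr_desc, ← Category.assoc, hy]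
      simp only [Category.assoc]
      show j ≫ y₁ ≫ w'' = y' ≫ ιQ
      rw [hP'.inr_desc, hQ.inr_desc]
  have hsqB : ρP ≫ w' = w'' ≫ ρQ := by
    apply hP'.hom_ext
    · rw [← Category.assoc, hP'.inl_desc]
      show a ≫ w' = a₁ ≫ w'' ≫ ρQ
      rw [← Category.assoc, hP'.inl_desc, Category.assoc, hQ'.inl_desc, hc]
    · rw [← Category.assoc, hP'.inr_desc]
      show (s ≫ y) ≫ w' = y₁ ≫ w'' ≫ ρQ
      rw [← Category.assoc, hP'.inr_desc, hQ'.inr_desc, Category.assoc, hy]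
  exact M.W_retract w' w'' ιP ρP ιQ ρQ hPret hQret hsqA hsqB hw''

end Aux

section Aux2

variable {C : Type u} [Category.{v} C]

/-- If `P` is the pushout of `g : X ⊔ Z ⟶ A` along `f ⊔ 𝟙 Z`, then `P` is also
the pushout of `inl ≫ g : X ⟶ A` along `f`. -/
lemma isPushout_of_coprodMapId [HasBinaryCoproducts C]
    {X Y Z A P : C} (f : X ⟶ Y) (g : X ⨿ Z ⟶ A) (a : A ⟶ P) (y : Y ⨿ Z ⟶ P)
    (h : IsPushout g (coprod.map f (𝟙 Z)) a y) :
    IsPushout (coprod.inl ≫ g) f a (coprod.inl ≫ y) := by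
  have eq : (coprod.inl ≫ g) ≫ a = f ≫ coprod.inl ≫ y := by
    rw [Category.assoc, h.w, ← Category.assoc, ← Category.assoc, coprod.inl_map]
  have hinr : (coprod.inr : Z ⟶ Y ⨿ Z) ≫ y = coprod.inr ≫ g ≫ a := by
    rw [h.w, ← Category.assoc, coprod.inr_map]; simp
  apply IsPushout.of_isColimit' ⟨eq⟩
  refine PushoutCocone.IsColimit.mk _ (fun s => h.desc s.inl
    (coprod.desc s.inr (coprod.inr ≫ g ≫ s.inl)) ?_) (fun s => h.inl_desc _ _ _) (fun s => ?_)
    (fun s m h1 h2 => ?_)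
  · apply coprod.hom_ext
    · rw [← Category.assoc, ← Category.assoc, coprod.inl_map]
      simpa [Category.assoc, coprod.inl_desc, coprod.inr_desc] using s.condition
    · rw [← Category.assoc, ← Category.assoc, coprod.inr_map]
      simp [coprod.inl_desc, coprod.inr_desc]
  · rw [Category.assoc, h.inr_desc]
    simp [coprod.inl_desc, coprod.inr_desc]
  · apply h.hom_ext
    · rw [h.inl_desc]; exact h1
    · rw [h.inr_desc]
      apply coprod.hom_ext
      · rw [← Category.assoc]
        simpa [coprod.inl_desc, coprod.inr_desc] using h2
      · rw [← Category.assoc, hinr]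
        simp [Category.assoc, h1, coprod.inl_desc, coprod.inr_desc]

/-- The coproduct with an identity of an h-cofibration is an h-cofibration. -/
lemma hcof_coprodMapId [HasBinaryCoproducts C] (M : ModelStruct C)
    {X Y : C} (f : X ⟶ Y) (Z : C) (hf : HCof M f) : HCof M (coprod.map f (𝟙 Z)) := by
  intro A B P Q g w a y b y' w' hw hP hQ hc hy
  have hP' := isPushout_of_coprodMapId f g a y hP
  have hQ' := isPushout_of_coprodMapId f (g ≫ w) b y' hQ
  rw [← Category.assoc] at hQ'
  exact hf (coprod.inl ≫ g) w a (coprod.inl ≫ y) b (coprod.inl ≫ y') w' hw hP' hQ' hc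
    (by rw [Category.assoc, hy])

/-- h-cofibrations are closed under composition. -/
lemma hcof_comp [HasPushouts C] (M : ModelStruct C)
    {X Y Z : C} (f : X ⟶ Y) (h : Y ⟶ Z) (hf : HCof M f) (hh : HCof M h) :
    HCof M (f ≫ h) := by
  intro A B P Q g w a z b z' w' hw hP hQ hc hz
  have hP₁ : IsPushout g f (pushout.inl g f) (pushout.inr g f) := IsPushout.of_hasPushout _ _
  have hQ₁ : IsPushout (g ≫ w) f (pushout.inl (g ≫ w) f) (pushout.inr (g ≫ w) f) :=
    IsPushout.of_hasPushout _ _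
  set a₁ := pushout.inl g f
  set y₁ := pushout.inr g f
  set b₁ := pushout.inl (g ≫ w) f
  set y'₁ := pushout.inr (g ≫ w) f
  let w₁ : pushout g f ⟶ pushout (g ≫ w) f :=
    hP₁.desc (w ≫ b₁) y'₁ (by rw [← Category.assoc, hQ₁.w])
  have hw₁ : M.W w₁ :=
    hf g w a₁ y₁ b₁ y'₁ w₁ hw hP₁ hQ₁ (hP₁.inl_desc _ _ _) (hP₁.inr_desc _ _ _)
  let a₂ : pushout g f ⟶ P := hP₁.desc a (h ≫ z) (by rw [hP.w, Category.assoc])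
  let b₂ : pushout (g ≫ w) f ⟶ Q := hQ₁.desc b (h ≫ z') (by rw [hQ.w, Category.assoc])
  have hP2 : IsPushout y₁ h a₂ z := by
    refine IsPushout.of_top ?_ (hP₁.inr_desc _ _ _) hP₁
    rw [show a₁ ≫ a₂ = a from hP₁.inl_desc _ _ _]
    exact hP
  have hQ2 : IsPushout y'₁ h b₂ z' := by
    refine IsPushout.of_top ?_ (hQ₁.inr_desc _ _ _) hQ₁
    rw [show b₁ ≫ b₂ = b from hQ₁.inl_desc _ _ _]
    exact hQ
  have hy₁w₁ : y₁ ≫ w₁ = y'₁ := hP₁.inr_desc _ _ _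
  rw [← hy₁w₁] at hQ2
  have hcsq : a₂ ≫ w' = w₁ ≫ b₂ := by
    apply hP₁.hom_ext
    · rw [← Category.assoc, ← Category.assoc]
      simp only [a₂, w₁, hP₁.inl_desc]
      rw [hc, Category.assoc]
      simp [b₂]
    · rw [← Category.assoc, ← Category.assoc]
      simp only [a₂, w₁, hP₁.inr_desc]
      rw [Category.assoc, hz]
      simp [b₂]
  exact hh y₁ w₁ a₂ z b₂ z' w' hw₁ hP2 hQ2 hcsq hz

end Aux2

/-- The class of h-cofibrations is closed under retracts in the arrow category and
under finite coproducts: if `f` is an h-cofibration and `Z` any object then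
`f ⊔ 𝟙 Z` is an h-cofibration, and the coproduct of two h-cofibrations is an
h-cofibration. -/
theorem statement_2 [HasPushouts C] [HasBinaryCoproducts C] (M : ModelStruct C) :
    (∀ {X Y X' Y' : C} (f : X ⟶ Y) (f' : X' ⟶ Y') (i : X ⟶ X') (r : X' ⟶ X)
        (j : Y ⟶ Y') (s : Y' ⟶ Y), i ≫ r = 𝟙 X → j ≫ s = 𝟙 Y →
        i ≫ f' = f ≫ j → r ≫ f = f' ≫ s → HCof M f' → HCof M f) ∧
    (∀ {X Y : C} (f : X ⟶ Y) (Z : C), HCof M f → HCof M (coprod.map f (𝟙 Z))) ∧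
    (∀ {X Y X' Y' : C} (f : X ⟶ Y) (g : X' ⟶ Y'), HCof M f → HCof M g →
        HCof M (coprod.map f g)) := by
  refine ⟨fun f f' i r j s hir hjs h1 h2 hf' =>
      hcof_retract M f f' i r j s hir hjs h1 h2 hf',
    fun f Z hf => hcof_coprodMapId M f Z hf, ?_⟩
  intro X Y X' Y' f g hf hg
  have h1 : HCof M (coprod.map f (𝟙 X')) := hcof_coprodMapId M f X' hf
  have h2 : HCof M (coprod.map g (𝟙 Y)) := hcof_coprodMapId M g Y hg
  have h3 : HCof M (coprod.map (𝟙 Y) g) := by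
    refine hcof_retract M _ _ (coprod.braiding Y X').hom (coprod.braiding Y X').inv
      (coprod.braiding Y Y').hom (coprod.braiding Y Y').inv (by simp [coprod.inl_desc, coprod.inr_desc]) (by simp [coprod.inl_desc, coprod.inr_desc]) ?_ ?_ h2
    · apply coprod.hom_ext <;> simp [coprod.braiding]
    · apply coprod.hom_ext <;> simp [coprod.braiding]
  have h4 := hcof_comp M _ _ h1 h3
  have heq : coprod.map f (𝟙 X') ≫ coprod.map (𝟙 Y) g = coprod.map f g := by
    rw [coprod.map_map, Category.comp_id, Category.id_comp]
  rwa [heq] at h4
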